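/- The polynomial F(w¹,w²,w³,w⁴) = w¹((w¹w³ + (w²)²)/12 + (w⁴)²/4) + (w²)²(w³)³/1296 − (w²)³w³/216 + (w³)⁷/1632960 + (w²w³/24 + (w³)³/432)(w⁴)² satisfies the WDVV associativity equations on ℝ⁴ with constant metric η given by η₁₃ = η₃₁ = 1/6, η₂₂ = 1/6, η₄₄ = 1/2 and all other entries zero: for all α,β one has ∂₁∂_α∂_β F = η_{αβ}, the matrix η is invertible, and the structure constants c^γ_{αβ} = Σ_ε (η⁻¹)^{γε} ∂_ε∂_α∂_β F satisfy Σ_ε c^ε_{αβ} c^σ_{εγ} = Σ_ε c^ε_{αγ} c^σ_{εβ} for all α,β,γ,σ at every point of ℝ⁴. -/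

import Mathlib

/-- Partial derivative of `f : (Fin N → ℝ) → ℝ` in the `i`-th coordinate direction. -/
noncomputable def pd {N : ℕ} (i : Fin N) (f : (Fin N → ℝ) → ℝ) : (Fin N → ℝ) → ℝ :=
  fun x => fderiv ℝ f x (Pi.single i 1)

/-- The potential. -/
noncomputable def FF : (Fin 4 → ℝ) → ℝ :=
  fun w => w 0 * ((w 0 * w 2 + (w 1) ^ 2) / 12 + (w 3) ^ 2 / 4) + (w 1) ^ 2 * (w 2) ^ 3 / 1296 - (w 1) ^ 3 * w 2 / 216 + (w 2) ^ 7 / 1632960 + (w 1 * w 2 / 24 + (w 2) ^ 3 / 432) * (w 3) ^ 2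

/-- The constant metric. -/
noncomputable def eta : Matrix (Fin 4) (Fin 4) ℝ :=
  !![0, 0, 1/6, 0; 0, 1/6, 0, 0; 1/6, 0, 0, 0; 0, 0, 0, 1/2]

/-- Third partial derivatives `c_(αβγ) = ∂_α ∂_β ∂_γ F`. -/
noncomputable def c3 (α β γ : Fin 4) (x : Fin 4 → ℝ) : ℝ :=
  pd α (pd β (pd γ FF)) x

/-- Structure constants `c^γ_(αβ) = Σ_ε (η⁻¹)^(γε) c_(εαβ)`. -/
noncomputable def cUp (γ α β : Fin 4) (x : Fin 4 → ℝ) : ℝ :=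
  ∑ ε, eta⁻¹ γ ε * c3 ε α β x

section pdlemmas
variable {N : ℕ} {f g : (Fin N → ℝ) → ℝ} {x : Fin N → ℝ}

lemma pd_add (i : Fin N) (hf : DifferentiableAt ℝ f x) (hg : DifferentiableAt ℝ g x) :
    pd i (fun y => f y + g y) x = pd i f x + pd i g x := by
  simp [pd, fderiv_fun_add hf hg]

lemma pd_sub (i : Fin N) (hf : DifferentiableAt ℝ f x) (hg : DifferentiableAt ℝ g x) :
    pd i (fun y => f y - g y) x = pd i f x - pd i g x := by
  simp [pd, fderiv_fun_sub hf hg]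

lemma pd_mul (i : Fin N) (hf : DifferentiableAt ℝ f x) (hg : DifferentiableAt ℝ g x) :
    pd i (fun y => f y * g y) x = f x * pd i g x + g x * pd i f x := by
  simp [pd, fderiv_fun_mul hf hg]

lemma pd_const (i : Fin N) (c : ℝ) : pd i (fun _ => c) x = 0 := by
  simp [pd]

lemma pd_pow (i : Fin N) (n : ℕ) (hf : DifferentiableAt ℝ f x) :
    pd i (fun y => f y ^ n) x = n * f x ^ (n - 1) * pd i f x := by
  induction n with
  | zero => simpa using pd_const i 1
  | succ n ih =>
    have h : (fun y => f y ^ (n + 1)) = fun y => f y ^ n * f y := by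
      funext y; ring
    rw [h, pd_mul i (show DifferentiableAt ℝ (fun y => f y ^ n) x from hf.pow n) hf, ih]
    rcases n with _ | m
    · simp
    · push_cast
      ring

lemma pd_div_const (i : Fin N) (c : ℝ) (hf : DifferentiableAt ℝ f x) :
    pd i (fun y => f y / c) x = pd i f x / c := by
  have h : (fun y => f y / c) = fun y => c⁻¹ * f y := by funext y; rw [div_eq_inv_mul]
  rw [h, pd, fderiv_const_mul hf c⁻¹]
  simp [pd, div_eq_inv_mul]

lemma pd_coord (i j : Fin N) : pd i (fun w => w j) x = if j = i then 1 else 0 := by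
  have h : (fun w : Fin N → ℝ => w j) = (ContinuousLinearMap.proj j : (Fin N → ℝ) →L[ℝ] ℝ) := rfl
  rw [pd, h, ContinuousLinearMap.fderiv]
  simp [Pi.single_apply]

end pdlemmas

noncomputable def g0 : (Fin 4 → ℝ) → ℝ := fun w => w 0 * w 2 / 6 + w 1 ^ 2 / 12 + w 3 ^ 2 / 4

noncomputable def g1 : (Fin 4 → ℝ) → ℝ := fun w => w 0 * w 1 / 6 + w 1 * w 2 ^ 3 / 648 - w 1 ^ 2 * w 2 / 72 + w 2 * w 3 ^ 2 / 24

noncomputable def g2 : (Fin 4 → ℝ) → ℝ := fun w => w 0 ^ 2 / 12 + w 1 ^ 2 * w 2 ^ 2 / 432 - w 1 ^ 3 / 216 + w 2 ^ 6 / 233280 + w 1 * w 3 ^ 2 / 24 + w 2 ^ 2 * w 3 ^ 2 / 144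

noncomputable def g3 : (Fin 4 → ℝ) → ℝ := fun w => w 0 * w 3 / 2 + w 1 * w 2 * w 3 / 12 + w 2 ^ 3 * w 3 / 216

noncomputable def h00 : (Fin 4 → ℝ) → ℝ := fun w => w 2 / 6

noncomputable def h01 : (Fin 4 → ℝ) → ℝ := fun w => w 1 / 6

noncomputable def h02 : (Fin 4 → ℝ) → ℝ := fun w => w 0 / 6

noncomputable def h03 : (Fin 4 → ℝ) → ℝ := fun w => w 3 / 2

noncomputable def h11 : (Fin 4 → ℝ) → ℝ := fun w => w 0 / 6 + w 2 ^ 3 / 648 - w 1 * w 2 / 36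

noncomputable def h12 : (Fin 4 → ℝ) → ℝ := fun w => w 1 * w 2 ^ 2 / 216 - w 1 ^ 2 / 72 + w 3 ^ 2 / 24

noncomputable def h13 : (Fin 4 → ℝ) → ℝ := fun w => w 2 * w 3 / 12

noncomputable def h22 : (Fin 4 → ℝ) → ℝ := fun w => w 1 ^ 2 * w 2 / 216 + w 2 ^ 5 / 38880 + w 2 * w 3 ^ 2 / 72

noncomputable def h23 : (Fin 4 → ℝ) → ℝ := fun w => w 1 * w 3 / 12 + w 2 ^ 2 * w 3 / 72

noncomputable def h33 : (Fin 4 → ℝ) → ℝ := fun w => w 0 / 2 + w 1 * w 2 / 12 + w 2 ^ 3 / 216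

noncomputable def t000 : (Fin 4 → ℝ) → ℝ := fun w => 0

noncomputable def t001 : (Fin 4 → ℝ) → ℝ := fun w => 0

noncomputable def t002 : (Fin 4 → ℝ) → ℝ := fun w => 1/6

noncomputable def t003 : (Fin 4 → ℝ) → ℝ := fun w => 0

noncomputable def t011 : (Fin 4 → ℝ) → ℝ := fun w => 1/6

noncomputable def t012 : (Fin 4 → ℝ) → ℝ := fun w => 0

noncomputable def t013 : (Fin 4 → ℝ) → ℝ := fun w => 0

noncomputable def t022 : (Fin 4 → ℝ) → ℝ := fun w => 0

noncomputable def t023 : (Fin 4 → ℝ) → ℝ := fun w => 0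

noncomputable def t033 : (Fin 4 → ℝ) → ℝ := fun w => 1/2

noncomputable def t111 : (Fin 4 → ℝ) → ℝ := fun w => -(w 2) / 36

noncomputable def t112 : (Fin 4 → ℝ) → ℝ := fun w => w 2 ^ 2 / 216 - w 1 / 36

noncomputable def t113 : (Fin 4 → ℝ) → ℝ := fun w => 0

noncomputable def t122 : (Fin 4 → ℝ) → ℝ := fun w => w 1 * w 2 / 108

noncomputable def t123 : (Fin 4 → ℝ) → ℝ := fun w => w 3 / 12

noncomputable def t133 : (Fin 4 → ℝ) → ℝ := fun w => w 2 / 12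

noncomputable def t222 : (Fin 4 → ℝ) → ℝ := fun w => w 1 ^ 2 / 216 + w 2 ^ 4 / 7776 + w 3 ^ 2 / 72

noncomputable def t223 : (Fin 4 → ℝ) → ℝ := fun w => w 2 * w 3 / 36

noncomputable def t233 : (Fin 4 → ℝ) → ℝ := fun w => w 1 / 12 + w 2 ^ 2 / 72

noncomputable def t333 : (Fin 4 → ℝ) → ℝ := fun w => 0

lemma pdFF0 : pd 0 FF = g0 := by
  rw [show FF = (fun w => w 0 * ((w 0 * w 2 + (w 1) ^ 2) / 12 + (w 3) ^ 2 / 4) + (w 1) ^ 2 * (w 2) ^ 3 / 1296 - (w 1) ^ 3 * w 2 / 216 + (w 2) ^ 7 / 1632960 + (w 1 * w 2 / 24 + (w 2) ^ 3 / 432) * (w 3) ^ 2) from rfl]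
  funext x
  simp (disch := fun_prop) only [g0, pd_add, pd_sub, pd_mul, pd_pow, pd_div_const, pd_const, pd_coord]
  try simp
  try norm_num
  try ring

lemma pdFF1 : pd 1 FF = g1 := by
  rw [show FF = (fun w => w 0 * ((w 0 * w 2 + (w 1) ^ 2) / 12 + (w 3) ^ 2 / 4) + (w 1) ^ 2 * (w 2) ^ 3 / 1296 - (w 1) ^ 3 * w 2 / 216 + (w 2) ^ 7 / 1632960 + (w 1 * w 2 / 24 + (w 2) ^ 3 / 432) * (w 3) ^ 2) from rfl]
  funext x
  simp (disch := fun_prop) only [g1, pd_add, pd_sub, pd_mul, pd_pow, pd_div_const, pd_const, pd_coord]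
  try simp
  try norm_num
  try ring

lemma pdFF2 : pd 2 FF = g2 := by
  rw [show FF = (fun w => w 0 * ((w 0 * w 2 + (w 1) ^ 2) / 12 + (w 3) ^ 2 / 4) + (w 1) ^ 2 * (w 2) ^ 3 / 1296 - (w 1) ^ 3 * w 2 / 216 + (w 2) ^ 7 / 1632960 + (w 1 * w 2 / 24 + (w 2) ^ 3 / 432) * (w 3) ^ 2) from rfl]
  funext x
  simp (disch := fun_prop) only [g2, pd_add, pd_sub, pd_mul, pd_pow, pd_div_const, pd_const, pd_coord]
  try simp
  try norm_num
  try ring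

lemma pdFF3 : pd 3 FF = g3 := by
  rw [show FF = (fun w => w 0 * ((w 0 * w 2 + (w 1) ^ 2) / 12 + (w 3) ^ 2 / 4) + (w 1) ^ 2 * (w 2) ^ 3 / 1296 - (w 1) ^ 3 * w 2 / 216 + (w 2) ^ 7 / 1632960 + (w 1 * w 2 / 24 + (w 2) ^ 3 / 432) * (w 3) ^ 2) from rfl]
  funext x
  simp (disch := fun_prop) only [g3, pd_add, pd_sub, pd_mul, pd_pow, pd_div_const, pd_const, pd_coord]
  try simp
  try norm_num
  try ring

lemma pdG00 : pd 0 g0 = h00 := by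
  rw [show g0 = (fun w => w 0 * w 2 / 6 + w 1 ^ 2 / 12 + w 3 ^ 2 / 4) from rfl]
  funext x
  simp (disch := fun_prop) only [h00, pd_add, pd_sub, pd_mul, pd_pow, pd_div_const, pd_const, pd_coord]
  try simp
  try norm_num
  try ring

lemma pdG01 : pd 0 g1 = h01 := by
  rw [show g1 = (fun w => w 0 * w 1 / 6 + w 1 * w 2 ^ 3 / 648 - w 1 ^ 2 * w 2 / 72 + w 2 * w 3 ^ 2 / 24) from rfl]
  funext x
  simp (disch := fun_prop) only [h01, pd_add, pd_sub, pd_mul, pd_pow, pd_div_const, pd_const, pd_coord]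
  try simp
  try norm_num
  try ring

lemma pdG02 : pd 0 g2 = h02 := by
  rw [show g2 = (fun w => w 0 ^ 2 / 12 + w 1 ^ 2 * w 2 ^ 2 / 432 - w 1 ^ 3 / 216 + w 2 ^ 6 / 233280 + w 1 * w 3 ^ 2 / 24 + w 2 ^ 2 * w 3 ^ 2 / 144) from rfl]
  funext x
  simp (disch := fun_prop) only [h02, pd_add, pd_sub, pd_mul, pd_pow, pd_div_const, pd_const, pd_coord]
  try simp
  try norm_num
  try ring

lemma pdG03 : pd 0 g3 = h03 := by
  rw [show g3 = (fun w => w 0 * w 3 / 2 + w 1 * w 2 * w 3 / 12 + w 2 ^ 3 * w 3 / 216) from rfl]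
  funext x
  simp (disch := fun_prop) only [h03, pd_add, pd_sub, pd_mul, pd_pow, pd_div_const, pd_const, pd_coord]
  try simp
  try norm_num
  try ring

lemma pdG10 : pd 1 g0 = h01 := by
  rw [show g0 = (fun w => w 0 * w 2 / 6 + w 1 ^ 2 / 12 + w 3 ^ 2 / 4) from rfl]
  funext x
  simp (disch := fun_prop) only [h01, pd_add, pd_sub, pd_mul, pd_pow, pd_div_const, pd_const, pd_coord]
  try simp
  try norm_num
  try ring

lemma pdG11 : pd 1 g1 = h11 := by
  rw [show g1 = (fun w => w 0 * w 1 / 6 + w 1 * w 2 ^ 3 / 648 - w 1 ^ 2 * w 2 / 72 + w 2 * w 3 ^ 2 / 24) from rfl]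
  funext x
  simp (disch := fun_prop) only [h11, pd_add, pd_sub, pd_mul, pd_pow, pd_div_const, pd_const, pd_coord]
  try simp
  try norm_num
  try ring

lemma pdG12 : pd 1 g2 = h12 := by
  rw [show g2 = (fun w => w 0 ^ 2 / 12 + w 1 ^ 2 * w 2 ^ 2 / 432 - w 1 ^ 3 / 216 + w 2 ^ 6 / 233280 + w 1 * w 3 ^ 2 / 24 + w 2 ^ 2 * w 3 ^ 2 / 144) from rfl]
  funext x
  simp (disch := fun_prop) only [h12, pd_add, pd_sub, pd_mul, pd_pow, pd_div_const, pd_const, pd_coord]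
  try simp
  try norm_num
  try ring

lemma pdG13 : pd 1 g3 = h13 := by
  rw [show g3 = (fun w => w 0 * w 3 / 2 + w 1 * w 2 * w 3 / 12 + w 2 ^ 3 * w 3 / 216) from rfl]
  funext x
  simp (disch := fun_prop) only [h13, pd_add, pd_sub, pd_mul, pd_pow, pd_div_const, pd_const, pd_coord]
  try simp
  try norm_num
  try ring

lemma pdG20 : pd 2 g0 = h02 := by
  rw [show g0 = (fun w => w 0 * w 2 / 6 + w 1 ^ 2 / 12 + w 3 ^ 2 / 4) from rfl]
  funext x
  simp (disch := fun_prop) only [h02, pd_add, pd_sub, pd_mul, pd_pow, pd_div_const, pd_const, pd_coord]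
  try simp
  try norm_num
  try ring

lemma pdG21 : pd 2 g1 = h12 := by
  rw [show g1 = (fun w => w 0 * w 1 / 6 + w 1 * w 2 ^ 3 / 648 - w 1 ^ 2 * w 2 / 72 + w 2 * w 3 ^ 2 / 24) from rfl]
  funext x
  simp (disch := fun_prop) only [h12, pd_add, pd_sub, pd_mul, pd_pow, pd_div_const, pd_const, pd_coord]
  try simp
  try norm_num
  try ring

lemma pdG22 : pd 2 g2 = h22 := by
  rw [show g2 = (fun w => w 0 ^ 2 / 12 + w 1 ^ 2 * w 2 ^ 2 / 432 - w 1 ^ 3 / 216 + w 2 ^ 6 / 233280 + w 1 * w 3 ^ 2 / 24 + w 2 ^ 2 * w 3 ^ 2 / 144) from rfl]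
  funext x
  simp (disch := fun_prop) only [h22, pd_add, pd_sub, pd_mul, pd_pow, pd_div_const, pd_const, pd_coord]
  try simp
  try norm_num
  try ring

lemma pdG23 : pd 2 g3 = h23 := by
  rw [show g3 = (fun w => w 0 * w 3 / 2 + w 1 * w 2 * w 3 / 12 + w 2 ^ 3 * w 3 / 216) from rfl]
  funext x
  simp (disch := fun_prop) only [h23, pd_add, pd_sub, pd_mul, pd_pow, pd_div_const, pd_const, pd_coord]
  try simp
  try norm_num
  try ring

lemma pdG30 : pd 3 g0 = h03 := by
  rw [show g0 = (fun w => w 0 * w 2 / 6 + w 1 ^ 2 / 12 + w 3 ^ 2 / 4) from rfl]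
  funext x
  simp (disch := fun_prop) only [h03, pd_add, pd_sub, pd_mul, pd_pow, pd_div_const, pd_const, pd_coord]
  try simp
  try norm_num
  try ring

lemma pdG31 : pd 3 g1 = h13 := by
  rw [show g1 = (fun w => w 0 * w 1 / 6 + w 1 * w 2 ^ 3 / 648 - w 1 ^ 2 * w 2 / 72 + w 2 * w 3 ^ 2 / 24) from rfl]
  funext x
  simp (disch := fun_prop) only [h13, pd_add, pd_sub, pd_mul, pd_pow, pd_div_const, pd_const, pd_coord]
  try simp
  try norm_num
  try ring

lemma pdG32 : pd 3 g2 = h23 := by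
  rw [show g2 = (fun w => w 0 ^ 2 / 12 + w 1 ^ 2 * w 2 ^ 2 / 432 - w 1 ^ 3 / 216 + w 2 ^ 6 / 233280 + w 1 * w 3 ^ 2 / 24 + w 2 ^ 2 * w 3 ^ 2 / 144) from rfl]
  funext x
  simp (disch := fun_prop) only [h23, pd_add, pd_sub, pd_mul, pd_pow, pd_div_const, pd_const, pd_coord]
  try simp
  try norm_num
  try ring

lemma pdG33 : pd 3 g3 = h33 := by
  rw [show g3 = (fun w => w 0 * w 3 / 2 + w 1 * w 2 * w 3 / 12 + w 2 ^ 3 * w 3 / 216) from rfl]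
  funext x
  simp (disch := fun_prop) only [h33, pd_add, pd_sub, pd_mul, pd_pow, pd_div_const, pd_const, pd_coord]
  try simp
  try norm_num
  try ring

lemma pdH0_00 : pd 0 h00 = t000 := by
  rw [show h00 = (fun w => w 2 / 6) from rfl]
  funext x
  simp (disch := fun_prop) only [t000, pd_add, pd_sub, pd_mul, pd_pow, pd_div_const, pd_const, pd_coord]
  try simp
  try norm_num
  try ring

lemma pdH0_01 : pd 0 h01 = t001 := by
  rw [show h01 = (fun w => w 1 / 6) from rfl]
  funext x
  simp (disch := fun_prop) only [t001, pd_add, pd_sub, pd_mul, pd_pow, pd_div_const, pd_const, pd_coord]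
  try simp
  try norm_num
  try ring

lemma pdH0_02 : pd 0 h02 = t002 := by
  rw [show h02 = (fun w => w 0 / 6) from rfl]
  funext x
  simp (disch := fun_prop) only [t002, pd_add, pd_sub, pd_mul, pd_pow, pd_div_const, pd_const, pd_coord]
  try simp
  try norm_num
  try ring

lemma pdH0_03 : pd 0 h03 = t003 := by
  rw [show h03 = (fun w => w 3 / 2) from rfl]
  funext x
  simp (disch := fun_prop) only [t003, pd_add, pd_sub, pd_mul, pd_pow, pd_div_const, pd_const, pd_coord]
  try simp
  try norm_num
  try ring

lemma pdH0_11 : pd 0 h11 = t011 := by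
  rw [show h11 = (fun w => w 0 / 6 + w 2 ^ 3 / 648 - w 1 * w 2 / 36) from rfl]
  funext x
  simp (disch := fun_prop) only [t011, pd_add, pd_sub, pd_mul, pd_pow, pd_div_const, pd_const, pd_coord]
  try simp
  try norm_num
  try ring

lemma pdH0_12 : pd 0 h12 = t012 := by
  rw [show h12 = (fun w => w 1 * w 2 ^ 2 / 216 - w 1 ^ 2 / 72 + w 3 ^ 2 / 24) from rfl]
  funext x
  simp (disch := fun_prop) only [t012, pd_add, pd_sub, pd_mul, pd_pow, pd_div_const, pd_const, pd_coord]
  try simp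
  try norm_num
  try ring

lemma pdH0_13 : pd 0 h13 = t013 := by
  rw [show h13 = (fun w => w 2 * w 3 / 12) from rfl]
  funext x
  simp (disch := fun_prop) only [t013, pd_add, pd_sub, pd_mul, pd_pow, pd_div_const, pd_const, pd_coord]
  try simp
  try norm_num
  try ring

lemma pdH0_22 : pd 0 h22 = t022 := by
  rw [show h22 = (fun w => w 1 ^ 2 * w 2 / 216 + w 2 ^ 5 / 38880 + w 2 * w 3 ^ 2 / 72) from rfl]
  funext x
  simp (disch := fun_prop) only [t022, pd_add, pd_sub, pd_mul, pd_pow, pd_div_const, pd_const, pd_coord]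
  try simp
  try norm_num
  try ring

lemma pdH0_23 : pd 0 h23 = t023 := by
  rw [show h23 = (fun w => w 1 * w 3 / 12 + w 2 ^ 2 * w 3 / 72) from rfl]
  funext x
  simp (disch := fun_prop) only [t023, pd_add, pd_sub, pd_mul, pd_pow, pd_div_const, pd_const, pd_coord]
  try simp
  try norm_num
  try ring

lemma pdH0_33 : pd 0 h33 = t033 := by
  rw [show h33 = (fun w => w 0 / 2 + w 1 * w 2 / 12 + w 2 ^ 3 / 216) from rfl]
  funext x
  simp (disch := fun_prop) only [t033, pd_add, pd_sub, pd_mul, pd_pow, pd_div_const, pd_const, pd_coord]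
  try simp
  try norm_num
  try ring

lemma pdH1_00 : pd 1 h00 = t001 := by
  rw [show h00 = (fun w => w 2 / 6) from rfl]
  funext x
  simp (disch := fun_prop) only [t001, pd_add, pd_sub, pd_mul, pd_pow, pd_div_const, pd_const, pd_coord]
  try simp
  try norm_num
  try ring

lemma pdH1_01 : pd 1 h01 = t011 := by
  rw [show h01 = (fun w => w 1 / 6) from rfl]
  funext x
  simp (disch := fun_prop) only [t011, pd_add, pd_sub, pd_mul, pd_pow, pd_div_const, pd_const, pd_coord]
  try simp
  try norm_num
  try ring

lemma pdH1_02 : pd 1 h02 = t012 := by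
  rw [show h02 = (fun w => w 0 / 6) from rfl]
  funext x
  simp (disch := fun_prop) only [t012, pd_add, pd_sub, pd_mul, pd_pow, pd_div_const, pd_const, pd_coord]
  try simp
  try norm_num
  try ring

lemma pdH1_03 : pd 1 h03 = t013 := by
  rw [show h03 = (fun w => w 3 / 2) from rfl]
  funext x
  simp (disch := fun_prop) only [t013, pd_add, pd_sub, pd_mul, pd_pow, pd_div_const, pd_const, pd_coord]
  try simp
  try norm_num
  try ring

lemma pdH1_11 : pd 1 h11 = t111 := by
  rw [show h11 = (fun w => w 0 / 6 + w 2 ^ 3 / 648 - w 1 * w 2 / 36) from rfl]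
  funext x
  simp (disch := fun_prop) only [t111, pd_add, pd_sub, pd_mul, pd_pow, pd_div_const, pd_const, pd_coord]
  try simp
  try norm_num
  try ring

lemma pdH1_12 : pd 1 h12 = t112 := by
  rw [show h12 = (fun w => w 1 * w 2 ^ 2 / 216 - w 1 ^ 2 / 72 + w 3 ^ 2 / 24) from rfl]
  funext x
  simp (disch := fun_prop) only [t112, pd_add, pd_sub, pd_mul, pd_pow, pd_div_const, pd_const, pd_coord]
  try simp
  try norm_num
  try ring

lemma pdH1_13 : pd 1 h13 = t113 := by
  rw [show h13 = (fun w => w 2 * w 3 / 12) from rfl]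
  funext x
  simp (disch := fun_prop) only [t113, pd_add, pd_sub, pd_mul, pd_pow, pd_div_const, pd_const, pd_coord]
  try simp
  try norm_num
  try ring

lemma pdH1_22 : pd 1 h22 = t122 := by
  rw [show h22 = (fun w => w 1 ^ 2 * w 2 / 216 + w 2 ^ 5 / 38880 + w 2 * w 3 ^ 2 / 72) from rfl]
  funext x
  simp (disch := fun_prop) only [t122, pd_add, pd_sub, pd_mul, pd_pow, pd_div_const, pd_const, pd_coord]
  try simp
  try norm_num
  try ring

lemma pdH1_23 : pd 1 h23 = t123 := by
  rw [show h23 = (fun w => w 1 * w 3 / 12 + w 2 ^ 2 * w 3 / 72) from rfl]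
  funext x
  simp (disch := fun_prop) only [t123, pd_add, pd_sub, pd_mul, pd_pow, pd_div_const, pd_const, pd_coord]
  try simp
  try norm_num
  try ring

lemma pdH1_33 : pd 1 h33 = t133 := by
  rw [show h33 = (fun w => w 0 / 2 + w 1 * w 2 / 12 + w 2 ^ 3 / 216) from rfl]
  funext x
  simp (disch := fun_prop) only [t133, pd_add, pd_sub, pd_mul, pd_pow, pd_div_const, pd_const, pd_coord]
  try simp
  try norm_num
  try ring

lemma pdH2_00 : pd 2 h00 = t002 := by
  rw [show h00 = (fun w => w 2 / 6) from rfl]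
  funext x
  simp (disch := fun_prop) only [t002, pd_add, pd_sub, pd_mul, pd_pow, pd_div_const, pd_const, pd_coord]
  try simp
  try norm_num
  try ring

lemma pdH2_01 : pd 2 h01 = t012 := by
  rw [show h01 = (fun w => w 1 / 6) from rfl]
  funext x
  simp (disch := fun_prop) only [t012, pd_add, pd_sub, pd_mul, pd_pow, pd_div_const, pd_const, pd_coord]
  try simp
  try norm_num
  try ring

lemma pdH2_02 : pd 2 h02 = t022 := by
  rw [show h02 = (fun w => w 0 / 6) from rfl]
  funext x
  simp (disch := fun_prop) only [t022, pd_add, pd_sub, pd_mul, pd_pow, pd_div_const, pd_const, pd_coord]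
  try simp
  try norm_num
  try ring

lemma pdH2_03 : pd 2 h03 = t023 := by
  rw [show h03 = (fun w => w 3 / 2) from rfl]
  funext x
  simp (disch := fun_prop) only [t023, pd_add, pd_sub, pd_mul, pd_pow, pd_div_const, pd_const, pd_coord]
  try simp
  try norm_num
  try ring

lemma pdH2_11 : pd 2 h11 = t112 := by
  rw [show h11 = (fun w => w 0 / 6 + w 2 ^ 3 / 648 - w 1 * w 2 / 36) from rfl]
  funext x
  simp (disch := fun_prop) only [t112, pd_add, pd_sub, pd_mul, pd_pow, pd_div_const, pd_const, pd_coord]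
  try simp
  try norm_num
  try ring

lemma pdH2_12 : pd 2 h12 = t122 := by
  rw [show h12 = (fun w => w 1 * w 2 ^ 2 / 216 - w 1 ^ 2 / 72 + w 3 ^ 2 / 24) from rfl]
  funext x
  simp (disch := fun_prop) only [t122, pd_add, pd_sub, pd_mul, pd_pow, pd_div_const, pd_const, pd_coord]
  try simp
  try norm_num
  try ring

lemma pdH2_13 : pd 2 h13 = t123 := by
  rw [show h13 = (fun w => w 2 * w 3 / 12) from rfl]
  funext x
  simp (disch := fun_prop) only [t123, pd_add, pd_sub, pd_mul, pd_pow, pd_div_const, pd_const, pd_coord]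
  try simp
  try norm_num
  try ring

lemma pdH2_22 : pd 2 h22 = t222 := by
  rw [show h22 = (fun w => w 1 ^ 2 * w 2 / 216 + w 2 ^ 5 / 38880 + w 2 * w 3 ^ 2 / 72) from rfl]
  funext x
  simp (disch := fun_prop) only [t222, pd_add, pd_sub, pd_mul, pd_pow, pd_div_const, pd_const, pd_coord]
  try simp
  try norm_num
  try ring

lemma pdH2_23 : pd 2 h23 = t223 := by
  rw [show h23 = (fun w => w 1 * w 3 / 12 + w 2 ^ 2 * w 3 / 72) from rfl]
  funext x
  simp (disch := fun_prop) only [t223, pd_add, pd_sub, pd_mul, pd_pow, pd_div_const, pd_const, pd_coord]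
  try simp
  try norm_num
  try ring

lemma pdH2_33 : pd 2 h33 = t233 := by
  rw [show h33 = (fun w => w 0 / 2 + w 1 * w 2 / 12 + w 2 ^ 3 / 216) from rfl]
  funext x
  simp (disch := fun_prop) only [t233, pd_add, pd_sub, pd_mul, pd_pow, pd_div_const, pd_const, pd_coord]
  try simp
  try norm_num
  try ring

lemma pdH3_00 : pd 3 h00 = t003 := by
  rw [show h00 = (fun w => w 2 / 6) from rfl]
  funext x
  simp (disch := fun_prop) only [t003, pd_add, pd_sub, pd_mul, pd_pow, pd_div_const, pd_const, pd_coord]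
  try simp
  try norm_num
  try ring

lemma pdH3_01 : pd 3 h01 = t013 := by
  rw [show h01 = (fun w => w 1 / 6) from rfl]
  funext x
  simp (disch := fun_prop) only [t013, pd_add, pd_sub, pd_mul, pd_pow, pd_div_const, pd_const, pd_coord]
  try simp
  try norm_num
  try ring

lemma pdH3_02 : pd 3 h02 = t023 := by
  rw [show h02 = (fun w => w 0 / 6) from rfl]
  funext x
  simp (disch := fun_prop) only [t023, pd_add, pd_sub, pd_mul, pd_pow, pd_div_const, pd_const, pd_coord]
  try simp
  try norm_num
  try ring

lemma pdH3_03 : pd 3 h03 = t033 := by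
  rw [show h03 = (fun w => w 3 / 2) from rfl]
  funext x
  simp (disch := fun_prop) only [t033, pd_add, pd_sub, pd_mul, pd_pow, pd_div_const, pd_const, pd_coord]
  try simp
  try norm_num
  try ring

lemma pdH3_11 : pd 3 h11 = t113 := by
  rw [show h11 = (fun w => w 0 / 6 + w 2 ^ 3 / 648 - w 1 * w 2 / 36) from rfl]
  funext x
  simp (disch := fun_prop) only [t113, pd_add, pd_sub, pd_mul, pd_pow, pd_div_const, pd_const, pd_coord]
  try simp
  try norm_num
  try ring

lemma pdH3_12 : pd 3 h12 = t123 := by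
  rw [show h12 = (fun w => w 1 * w 2 ^ 2 / 216 - w 1 ^ 2 / 72 + w 3 ^ 2 / 24) from rfl]
  funext x
  simp (disch := fun_prop) only [t123, pd_add, pd_sub, pd_mul, pd_pow, pd_div_const, pd_const, pd_coord]
  try simp
  try norm_num
  try ring

lemma pdH3_13 : pd 3 h13 = t133 := by
  rw [show h13 = (fun w => w 2 * w 3 / 12) from rfl]
  funext x
  simp (disch := fun_prop) only [t133, pd_add, pd_sub, pd_mul, pd_pow, pd_div_const, pd_const, pd_coord]
  try simp
  try norm_num
  try ring

lemma pdH3_22 : pd 3 h22 = t223 := by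
  rw [show h22 = (fun w => w 1 ^ 2 * w 2 / 216 + w 2 ^ 5 / 38880 + w 2 * w 3 ^ 2 / 72) from rfl]
  funext x
  simp (disch := fun_prop) only [t223, pd_add, pd_sub, pd_mul, pd_pow, pd_div_const, pd_const, pd_coord]
  try simp
  try norm_num
  try ring

lemma pdH3_23 : pd 3 h23 = t233 := by
  rw [show h23 = (fun w => w 1 * w 3 / 12 + w 2 ^ 2 * w 3 / 72) from rfl]
  funext x
  simp (disch := fun_prop) only [t233, pd_add, pd_sub, pd_mul, pd_pow, pd_div_const, pd_const, pd_coord]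
  try simp
  try norm_num
  try ring

lemma pdH3_33 : pd 3 h33 = t333 := by
  rw [show h33 = (fun w => w 0 / 2 + w 1 * w 2 / 12 + w 2 ^ 3 / 216) from rfl]
  funext x
  simp (disch := fun_prop) only [t333, pd_add, pd_sub, pd_mul, pd_pow, pd_div_const, pd_const, pd_coord]
  try simp
  try norm_num
  try ring

lemma c3_000 (x : Fin 4 → ℝ) : c3 0 0 0 x = t000 x := by
  rw [c3, pdFF0, pdG00, pdH0_00]

lemma c3_001 (x : Fin 4 → ℝ) : c3 0 0 1 x = t001 x := by
  rw [c3, pdFF1, pdG01, pdH0_01]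

lemma c3_002 (x : Fin 4 → ℝ) : c3 0 0 2 x = t002 x := by
  rw [c3, pdFF2, pdG02, pdH0_02]

lemma c3_003 (x : Fin 4 → ℝ) : c3 0 0 3 x = t003 x := by
  rw [c3, pdFF3, pdG03, pdH0_03]

lemma c3_010 (x : Fin 4 → ℝ) : c3 0 1 0 x = t001 x := by
  rw [c3, pdFF0, pdG10, pdH0_01]

lemma c3_011 (x : Fin 4 → ℝ) : c3 0 1 1 x = t011 x := by
  rw [c3, pdFF1, pdG11, pdH0_11]

lemma c3_012 (x : Fin 4 → ℝ) : c3 0 1 2 x = t012 x := by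
  rw [c3, pdFF2, pdG12, pdH0_12]

lemma c3_013 (x : Fin 4 → ℝ) : c3 0 1 3 x = t013 x := by
  rw [c3, pdFF3, pdG13, pdH0_13]

lemma c3_020 (x : Fin 4 → ℝ) : c3 0 2 0 x = t002 x := by
  rw [c3, pdFF0, pdG20, pdH0_02]

lemma c3_021 (x : Fin 4 → ℝ) : c3 0 2 1 x = t012 x := by
  rw [c3, pdFF1, pdG21, pdH0_12]

lemma c3_022 (x : Fin 4 → ℝ) : c3 0 2 2 x = t022 x := by
  rw [c3, pdFF2, pdG22, pdH0_22]

lemma c3_023 (x : Fin 4 → ℝ) : c3 0 2 3 x = t023 x := by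
  rw [c3, pdFF3, pdG23, pdH0_23]

lemma c3_030 (x : Fin 4 → ℝ) : c3 0 3 0 x = t003 x := by
  rw [c3, pdFF0, pdG30, pdH0_03]

lemma c3_031 (x : Fin 4 → ℝ) : c3 0 3 1 x = t013 x := by
  rw [c3, pdFF1, pdG31, pdH0_13]

lemma c3_032 (x : Fin 4 → ℝ) : c3 0 3 2 x = t023 x := by
  rw [c3, pdFF2, pdG32, pdH0_23]

lemma c3_033 (x : Fin 4 → ℝ) : c3 0 3 3 x = t033 x := by
  rw [c3, pdFF3, pdG33, pdH0_33]

lemma c3_100 (x : Fin 4 → ℝ) : c3 1 0 0 x = t001 x := by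
  rw [c3, pdFF0, pdG00, pdH1_00]

lemma c3_101 (x : Fin 4 → ℝ) : c3 1 0 1 x = t011 x := by
  rw [c3, pdFF1, pdG01, pdH1_01]

lemma c3_102 (x : Fin 4 → ℝ) : c3 1 0 2 x = t012 x := by
  rw [c3, pdFF2, pdG02, pdH1_02]

lemma c3_103 (x : Fin 4 → ℝ) : c3 1 0 3 x = t013 x := by
  rw [c3, pdFF3, pdG03, pdH1_03]

lemma c3_110 (x : Fin 4 → ℝ) : c3 1 1 0 x = t011 x := by
  rw [c3, pdFF0, pdG10, pdH1_01]

lemma c3_111 (x : Fin 4 → ℝ) : c3 1 1 1 x = t111 x := by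
  rw [c3, pdFF1, pdG11, pdH1_11]

lemma c3_112 (x : Fin 4 → ℝ) : c3 1 1 2 x = t112 x := by
  rw [c3, pdFF2, pdG12, pdH1_12]

lemma c3_113 (x : Fin 4 → ℝ) : c3 1 1 3 x = t113 x := by
  rw [c3, pdFF3, pdG13, pdH1_13]

lemma c3_120 (x : Fin 4 → ℝ) : c3 1 2 0 x = t012 x := by
  rw [c3, pdFF0, pdG20, pdH1_02]

lemma c3_121 (x : Fin 4 → ℝ) : c3 1 2 1 x = t112 x := by
  rw [c3, pdFF1, pdG21, pdH1_12]

lemma c3_122 (x : Fin 4 → ℝ) : c3 1 2 2 x = t122 x := by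
  rw [c3, pdFF2, pdG22, pdH1_22]

lemma c3_123 (x : Fin 4 → ℝ) : c3 1 2 3 x = t123 x := by
  rw [c3, pdFF3, pdG23, pdH1_23]

lemma c3_130 (x : Fin 4 → ℝ) : c3 1 3 0 x = t013 x := by
  rw [c3, pdFF0, pdG30, pdH1_03]

lemma c3_131 (x : Fin 4 → ℝ) : c3 1 3 1 x = t113 x := by
  rw [c3, pdFF1, pdG31, pdH1_13]

lemma c3_132 (x : Fin 4 → ℝ) : c3 1 3 2 x = t123 x := by
  rw [c3, pdFF2, pdG32, pdH1_23]

lemma c3_133 (x : Fin 4 → ℝ) : c3 1 3 3 x = t133 x := by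
  rw [c3, pdFF3, pdG33, pdH1_33]

lemma c3_200 (x : Fin 4 → ℝ) : c3 2 0 0 x = t002 x := by
  rw [c3, pdFF0, pdG00, pdH2_00]

lemma c3_201 (x : Fin 4 → ℝ) : c3 2 0 1 x = t012 x := by
  rw [c3, pdFF1, pdG01, pdH2_01]

lemma c3_202 (x : Fin 4 → ℝ) : c3 2 0 2 x = t022 x := by
  rw [c3, pdFF2, pdG02, pdH2_02]

lemma c3_203 (x : Fin 4 → ℝ) : c3 2 0 3 x = t023 x := by
  rw [c3, pdFF3, pdG03, pdH2_03]

lemma c3_210 (x : Fin 4 → ℝ) : c3 2 1 0 x = t012 x := by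
  rw [c3, pdFF0, pdG10, pdH2_01]

lemma c3_211 (x : Fin 4 → ℝ) : c3 2 1 1 x = t112 x := by
  rw [c3, pdFF1, pdG11, pdH2_11]

lemma c3_212 (x : Fin 4 → ℝ) : c3 2 1 2 x = t122 x := by
  rw [c3, pdFF2, pdG12, pdH2_12]

lemma c3_213 (x : Fin 4 → ℝ) : c3 2 1 3 x = t123 x := by
  rw [c3, pdFF3, pdG13, pdH2_13]

lemma c3_220 (x : Fin 4 → ℝ) : c3 2 2 0 x = t022 x := by
  rw [c3, pdFF0, pdG20, pdH2_02]

lemma c3_221 (x : Fin 4 → ℝ) : c3 2 2 1 x = t122 x := by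
  rw [c3, pdFF1, pdG21, pdH2_12]

lemma c3_222 (x : Fin 4 → ℝ) : c3 2 2 2 x = t222 x := by
  rw [c3, pdFF2, pdG22, pdH2_22]

lemma c3_223 (x : Fin 4 → ℝ) : c3 2 2 3 x = t223 x := by
  rw [c3, pdFF3, pdG23, pdH2_23]

lemma c3_230 (x : Fin 4 → ℝ) : c3 2 3 0 x = t023 x := by
  rw [c3, pdFF0, pdG30, pdH2_03]

lemma c3_231 (x : Fin 4 → ℝ) : c3 2 3 1 x = t123 x := by
  rw [c3, pdFF1, pdG31, pdH2_13]

lemma c3_232 (x : Fin 4 → ℝ) : c3 2 3 2 x = t223 x := by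
  rw [c3, pdFF2, pdG32, pdH2_23]

lemma c3_233 (x : Fin 4 → ℝ) : c3 2 3 3 x = t233 x := by
  rw [c3, pdFF3, pdG33, pdH2_33]

lemma c3_300 (x : Fin 4 → ℝ) : c3 3 0 0 x = t003 x := by
  rw [c3, pdFF0, pdG00, pdH3_00]

lemma c3_301 (x : Fin 4 → ℝ) : c3 3 0 1 x = t013 x := by
  rw [c3, pdFF1, pdG01, pdH3_01]

lemma c3_302 (x : Fin 4 → ℝ) : c3 3 0 2 x = t023 x := by
  rw [c3, pdFF2, pdG02, pdH3_02]

lemma c3_303 (x : Fin 4 → ℝ) : c3 3 0 3 x = t033 x := by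
  rw [c3, pdFF3, pdG03, pdH3_03]

lemma c3_310 (x : Fin 4 → ℝ) : c3 3 1 0 x = t013 x := by
  rw [c3, pdFF0, pdG10, pdH3_01]

lemma c3_311 (x : Fin 4 → ℝ) : c3 3 1 1 x = t113 x := by
  rw [c3, pdFF1, pdG11, pdH3_11]

lemma c3_312 (x : Fin 4 → ℝ) : c3 3 1 2 x = t123 x := by
  rw [c3, pdFF2, pdG12, pdH3_12]

lemma c3_313 (x : Fin 4 → ℝ) : c3 3 1 3 x = t133 x := by
  rw [c3, pdFF3, pdG13, pdH3_13]

lemma c3_320 (x : Fin 4 → ℝ) : c3 3 2 0 x = t023 x := by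
  rw [c3, pdFF0, pdG20, pdH3_02]

lemma c3_321 (x : Fin 4 → ℝ) : c3 3 2 1 x = t123 x := by
  rw [c3, pdFF1, pdG21, pdH3_12]

lemma c3_322 (x : Fin 4 → ℝ) : c3 3 2 2 x = t223 x := by
  rw [c3, pdFF2, pdG22, pdH3_22]

lemma c3_323 (x : Fin 4 → ℝ) : c3 3 2 3 x = t233 x := by
  rw [c3, pdFF3, pdG23, pdH3_23]

lemma c3_330 (x : Fin 4 → ℝ) : c3 3 3 0 x = t033 x := by
  rw [c3, pdFF0, pdG30, pdH3_03]

lemma c3_331 (x : Fin 4 → ℝ) : c3 3 3 1 x = t133 x := by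
  rw [c3, pdFF1, pdG31, pdH3_13]

lemma c3_332 (x : Fin 4 → ℝ) : c3 3 3 2 x = t233 x := by
  rw [c3, pdFF2, pdG32, pdH3_23]

lemma c3_333 (x : Fin 4 → ℝ) : c3 3 3 3 x = t333 x := by
  rw [c3, pdFF3, pdG33, pdH3_33]


lemma etaMul : eta * !![0, 0, 6, 0; 0, 6, 0, 0; 6, 0, 0, 0; 0, 0, 0, 2] = 1 := by
  ext i j
  fin_cases i <;> fin_cases j <;>
    norm_num [eta, Matrix.mul_apply, Fin.sum_univ_four, Matrix.one_apply,
      Matrix.vecHead, Matrix.vecTail, Fin.ext_iff, Matrix.cons_val_two, Matrix.cons_val_three]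

lemma etaInv : eta⁻¹ = !![0, 0, 6, 0; 0, 6, 0, 0; 6, 0, 0, 0; 0, 0, 0, 2] :=
  Matrix.inv_eq_right_inv etaMul

lemma cUp0 (α β : Fin 4) (x : Fin 4 → ℝ) : cUp 0 α β x = 6 * c3 2 α β x := by
  simp [cUp, etaInv, Fin.sum_univ_four]

lemma cUp1 (α β : Fin 4) (x : Fin 4 → ℝ) : cUp 1 α β x = 6 * c3 1 α β x := by
  simp [cUp, etaInv, Fin.sum_univ_four]

lemma cUp2 (α β : Fin 4) (x : Fin 4 → ℝ) : cUp 2 α β x = 6 * c3 0 α β x := by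
  simp [cUp, etaInv, Fin.sum_univ_four]

lemma cUp3 (α β : Fin 4) (x : Fin 4 → ℝ) : cUp 3 α β x = 2 * c3 3 α β x := by
  simp [cUp, etaInv, Fin.sum_univ_four]

lemma cUpv_0_0_0 (x : Fin 4 → ℝ) : cUp 0 0 0 x = 6 * (1/6) := by
  rw [cUp0, c3_200]
  simp only [t002]

lemma cUpv_0_0_1 (x : Fin 4 → ℝ) : cUp 0 0 1 x = 6 * (0) := by
  rw [cUp0, c3_201]
  simp only [t012]

lemma cUpv_0_0_2 (x : Fin 4 → ℝ) : cUp 0 0 2 x = 6 * (0) := by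
  rw [cUp0, c3_202]
  simp only [t022]

lemma cUpv_0_0_3 (x : Fin 4 → ℝ) : cUp 0 0 3 x = 6 * (0) := by
  rw [cUp0, c3_203]
  simp only [t023]

lemma cUpv_0_1_0 (x : Fin 4 → ℝ) : cUp 0 1 0 x = 6 * (0) := by
  rw [cUp0, c3_210]
  simp only [t012]

lemma cUpv_0_1_1 (x : Fin 4 → ℝ) : cUp 0 1 1 x = 6 * (x 2 ^ 2 / 216 - x 1 / 36) := by
  rw [cUp0, c3_211]
  simp only [t112]

lemma cUpv_0_1_2 (x : Fin 4 → ℝ) : cUp 0 1 2 x = 6 * (x 1 * x 2 / 108) := by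
  rw [cUp0, c3_212]
  simp only [t122]

lemma cUpv_0_1_3 (x : Fin 4 → ℝ) : cUp 0 1 3 x = 6 * (x 3 / 12) := by
  rw [cUp0, c3_213]
  simp only [t123]

lemma cUpv_0_2_0 (x : Fin 4 → ℝ) : cUp 0 2 0 x = 6 * (0) := by
  rw [cUp0, c3_220]
  simp only [t022]

lemma cUpv_0_2_1 (x : Fin 4 → ℝ) : cUp 0 2 1 x = 6 * (x 1 * x 2 / 108) := by
  rw [cUp0, c3_221]
  simp only [t122]

lemma cUpv_0_2_2 (x : Fin 4 → ℝ) : cUp 0 2 2 x = 6 * (x 1 ^ 2 / 216 + x 2 ^ 4 / 7776 + x 3 ^ 2 / 72) := by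
  rw [cUp0, c3_222]
  simp only [t222]

lemma cUpv_0_2_3 (x : Fin 4 → ℝ) : cUp 0 2 3 x = 6 * (x 2 * x 3 / 36) := by
  rw [cUp0, c3_223]
  simp only [t223]

lemma cUpv_0_3_0 (x : Fin 4 → ℝ) : cUp 0 3 0 x = 6 * (0) := by
  rw [cUp0, c3_230]
  simp only [t023]

lemma cUpv_0_3_1 (x : Fin 4 → ℝ) : cUp 0 3 1 x = 6 * (x 3 / 12) := by
  rw [cUp0, c3_231]
  simp only [t123]

lemma cUpv_0_3_2 (x : Fin 4 → ℝ) : cUp 0 3 2 x = 6 * (x 2 * x 3 / 36) := by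
  rw [cUp0, c3_232]
  simp only [t223]

lemma cUpv_0_3_3 (x : Fin 4 → ℝ) : cUp 0 3 3 x = 6 * (x 1 / 12 + x 2 ^ 2 / 72) := by
  rw [cUp0, c3_233]
  simp only [t233]

lemma cUpv_1_0_0 (x : Fin 4 → ℝ) : cUp 1 0 0 x = 6 * (0) := by
  rw [cUp1, c3_100]
  simp only [t001]

lemma cUpv_1_0_1 (x : Fin 4 → ℝ) : cUp 1 0 1 x = 6 * (1/6) := by
  rw [cUp1, c3_101]
  simp only [t011]

lemma cUpv_1_0_2 (x : Fin 4 → ℝ) : cUp 1 0 2 x = 6 * (0) := by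
  rw [cUp1, c3_102]
  simp only [t012]

lemma cUpv_1_0_3 (x : Fin 4 → ℝ) : cUp 1 0 3 x = 6 * (0) := by
  rw [cUp1, c3_103]
  simp only [t013]

lemma cUpv_1_1_0 (x : Fin 4 → ℝ) : cUp 1 1 0 x = 6 * (1/6) := by
  rw [cUp1, c3_110]
  simp only [t011]

lemma cUpv_1_1_1 (x : Fin 4 → ℝ) : cUp 1 1 1 x = 6 * (-(x 2) / 36) := by
  rw [cUp1, c3_111]
  simp only [t111]

lemma cUpv_1_1_2 (x : Fin 4 → ℝ) : cUp 1 1 2 x = 6 * (x 2 ^ 2 / 216 - x 1 / 36) := by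
  rw [cUp1, c3_112]
  simp only [t112]

lemma cUpv_1_1_3 (x : Fin 4 → ℝ) : cUp 1 1 3 x = 6 * (0) := by
  rw [cUp1, c3_113]
  simp only [t113]

lemma cUpv_1_2_0 (x : Fin 4 → ℝ) : cUp 1 2 0 x = 6 * (0) := by
  rw [cUp1, c3_120]
  simp only [t012]

lemma cUpv_1_2_1 (x : Fin 4 → ℝ) : cUp 1 2 1 x = 6 * (x 2 ^ 2 / 216 - x 1 / 36) := by
  rw [cUp1, c3_121]
  simp only [t112]

lemma cUpv_1_2_2 (x : Fin 4 → ℝ) : cUp 1 2 2 x = 6 * (x 1 * x 2 / 108) := by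
  rw [cUp1, c3_122]
  simp only [t122]

lemma cUpv_1_2_3 (x : Fin 4 → ℝ) : cUp 1 2 3 x = 6 * (x 3 / 12) := by
  rw [cUp1, c3_123]
  simp only [t123]

lemma cUpv_1_3_0 (x : Fin 4 → ℝ) : cUp 1 3 0 x = 6 * (0) := by
  rw [cUp1, c3_130]
  simp only [t013]

lemma cUpv_1_3_1 (x : Fin 4 → ℝ) : cUp 1 3 1 x = 6 * (0) := by
  rw [cUp1, c3_131]
  simp only [t113]

lemma cUpv_1_3_2 (x : Fin 4 → ℝ) : cUp 1 3 2 x = 6 * (x 3 / 12) := by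
  rw [cUp1, c3_132]
  simp only [t123]

lemma cUpv_1_3_3 (x : Fin 4 → ℝ) : cUp 1 3 3 x = 6 * (x 2 / 12) := by
  rw [cUp1, c3_133]
  simp only [t133]

lemma cUpv_2_0_0 (x : Fin 4 → ℝ) : cUp 2 0 0 x = 6 * (0) := by
  rw [cUp2, c3_000]
  simp only [t000]

lemma cUpv_2_0_1 (x : Fin 4 → ℝ) : cUp 2 0 1 x = 6 * (0) := by
  rw [cUp2, c3_001]
  simp only [t001]

lemma cUpv_2_0_2 (x : Fin 4 → ℝ) : cUp 2 0 2 x = 6 * (1/6) := by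
  rw [cUp2, c3_002]
  simp only [t002]

lemma cUpv_2_0_3 (x : Fin 4 → ℝ) : cUp 2 0 3 x = 6 * (0) := by
  rw [cUp2, c3_003]
  simp only [t003]

lemma cUpv_2_1_0 (x : Fin 4 → ℝ) : cUp 2 1 0 x = 6 * (0) := by
  rw [cUp2, c3_010]
  simp only [t001]

lemma cUpv_2_1_1 (x : Fin 4 → ℝ) : cUp 2 1 1 x = 6 * (1/6) := by
  rw [cUp2, c3_011]
  simp only [t011]

lemma cUpv_2_1_2 (x : Fin 4 → ℝ) : cUp 2 1 2 x = 6 * (0) := by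
  rw [cUp2, c3_012]
  simp only [t012]

lemma cUpv_2_1_3 (x : Fin 4 → ℝ) : cUp 2 1 3 x = 6 * (0) := by
  rw [cUp2, c3_013]
  simp only [t013]

lemma cUpv_2_2_0 (x : Fin 4 → ℝ) : cUp 2 2 0 x = 6 * (1/6) := by
  rw [cUp2, c3_020]
  simp only [t002]

lemma cUpv_2_2_1 (x : Fin 4 → ℝ) : cUp 2 2 1 x = 6 * (0) := by
  rw [cUp2, c3_021]
  simp only [t012]

lemma cUpv_2_2_2 (x : Fin 4 → ℝ) : cUp 2 2 2 x = 6 * (0) := by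
  rw [cUp2, c3_022]
  simp only [t022]

lemma cUpv_2_2_3 (x : Fin 4 → ℝ) : cUp 2 2 3 x = 6 * (0) := by
  rw [cUp2, c3_023]
  simp only [t023]

lemma cUpv_2_3_0 (x : Fin 4 → ℝ) : cUp 2 3 0 x = 6 * (0) := by
  rw [cUp2, c3_030]
  simp only [t003]

lemma cUpv_2_3_1 (x : Fin 4 → ℝ) : cUp 2 3 1 x = 6 * (0) := by
  rw [cUp2, c3_031]
  simp only [t013]

lemma cUpv_2_3_2 (x : Fin 4 → ℝ) : cUp 2 3 2 x = 6 * (0) := by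
  rw [cUp2, c3_032]
  simp only [t023]

lemma cUpv_2_3_3 (x : Fin 4 → ℝ) : cUp 2 3 3 x = 6 * (1/2) := by
  rw [cUp2, c3_033]
  simp only [t033]

lemma cUpv_3_0_0 (x : Fin 4 → ℝ) : cUp 3 0 0 x = 2 * (0) := by
  rw [cUp3, c3_300]
  simp only [t003]

lemma cUpv_3_0_1 (x : Fin 4 → ℝ) : cUp 3 0 1 x = 2 * (0) := by
  rw [cUp3, c3_301]
  simp only [t013]

lemma cUpv_3_0_2 (x : Fin 4 → ℝ) : cUp 3 0 2 x = 2 * (0) := by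
  rw [cUp3, c3_302]
  simp only [t023]

lemma cUpv_3_0_3 (x : Fin 4 → ℝ) : cUp 3 0 3 x = 2 * (1/2) := by
  rw [cUp3, c3_303]
  simp only [t033]

lemma cUpv_3_1_0 (x : Fin 4 → ℝ) : cUp 3 1 0 x = 2 * (0) := by
  rw [cUp3, c3_310]
  simp only [t013]

lemma cUpv_3_1_1 (x : Fin 4 → ℝ) : cUp 3 1 1 x = 2 * (0) := by
  rw [cUp3, c3_311]
  simp only [t113]

lemma cUpv_3_1_2 (x : Fin 4 → ℝ) : cUp 3 1 2 x = 2 * (x 3 / 12) := by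
  rw [cUp3, c3_312]
  simp only [t123]

lemma cUpv_3_1_3 (x : Fin 4 → ℝ) : cUp 3 1 3 x = 2 * (x 2 / 12) := by
  rw [cUp3, c3_313]
  simp only [t133]

lemma cUpv_3_2_0 (x : Fin 4 → ℝ) : cUp 3 2 0 x = 2 * (0) := by
  rw [cUp3, c3_320]
  simp only [t023]

lemma cUpv_3_2_1 (x : Fin 4 → ℝ) : cUp 3 2 1 x = 2 * (x 3 / 12) := by
  rw [cUp3, c3_321]
  simp only [t123]

lemma cUpv_3_2_2 (x : Fin 4 → ℝ) : cUp 3 2 2 x = 2 * (x 2 * x 3 / 36) := by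
  rw [cUp3, c3_322]
  simp only [t223]

lemma cUpv_3_2_3 (x : Fin 4 → ℝ) : cUp 3 2 3 x = 2 * (x 1 / 12 + x 2 ^ 2 / 72) := by
  rw [cUp3, c3_323]
  simp only [t233]

lemma cUpv_3_3_0 (x : Fin 4 → ℝ) : cUp 3 3 0 x = 2 * (1/2) := by
  rw [cUp3, c3_330]
  simp only [t033]

lemma cUpv_3_3_1 (x : Fin 4 → ℝ) : cUp 3 3 1 x = 2 * (x 2 / 12) := by
  rw [cUp3, c3_331]
  simp only [t133]

lemma cUpv_3_3_2 (x : Fin 4 → ℝ) : cUp 3 3 2 x = 2 * (x 1 / 12 + x 2 ^ 2 / 72) := by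
  rw [cUp3, c3_332]
  simp only [t233]

lemma cUpv_3_3_3 (x : Fin 4 → ℝ) : cUp 3 3 3 x = 2 * (0) := by
  rw [cUp3, c3_333]
  simp only [t333]


lemma fin4 {P : Fin 4 → Prop} (h0 : P 0) (h1 : P 1) (h2 : P 2) (h3 : P 3) : ∀ i, P i := by
  intro i
  fin_cases i
  · exact h0
  · exact h1
  · exact h2
  · exact h3

set_option maxHeartbeats 4000000 in
theorem stmt_2 :
    (∀ (α β : Fin 4) (x : Fin 4 → ℝ), c3 0 α β x = eta α β) ∧
    IsUnit eta.det ∧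
    (∀ (α β γ σ : Fin 4) (x : Fin 4 → ℝ), 
      ∑ ε, cUp ε α β x * cUp σ ε γ x = ∑ ε, cUp ε α γ x * cUp σ ε β x) := by
  refine ⟨?_, Matrix.isUnit_det_of_right_inverse etaMul, ?_⟩
  · refine fin4 ?_ ?_ ?_ ?_ <;> refine fin4 ?_ ?_ ?_ ?_ <;> intro x <;>
      norm_num [c3_000, c3_001, c3_002, c3_003, c3_010, c3_011, c3_012, c3_013, c3_020, c3_021, c3_022, c3_023, c3_030, c3_031, c3_032, c3_033, t000, t001, t002, t003, t011, t012, t013, t022, t023, t033, t111, t112, t113, t122, t123, t133, t222, t223, t233, t333, eta, Matrix.vecHead, Matrix.vecTail, Matrix.cons_val_two, Matrix.cons_val_three]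
  · refine fin4 ?_ ?_ ?_ ?_ <;> refine fin4 ?_ ?_ ?_ ?_ <;> refine fin4 ?_ ?_ ?_ ?_ <;>
      refine fin4 ?_ ?_ ?_ ?_ <;> intro x <;>
      simp only [Fin.sum_univ_four, cUpv_0_0_0, cUpv_0_0_1, cUpv_0_0_2, cUpv_0_0_3, cUpv_0_1_0, cUpv_0_1_1, cUpv_0_1_2, cUpv_0_1_3, cUpv_0_2_0, cUpv_0_2_1, cUpv_0_2_2, cUpv_0_2_3, cUpv_0_3_0, cUpv_0_3_1, cUpv_0_3_2, cUpv_0_3_3, cUpv_1_0_0, cUpv_1_0_1, cUpv_1_0_2, cUpv_1_0_3, cUpv_1_1_0, cUpv_1_1_1, cUpv_1_1_2, cUpv_1_1_3, cUpv_1_2_0, cUpv_1_2_1, cUpv_1_2_2, cUpv_1_2_3, cUpv_1_3_0, cUpv_1_3_1, cUpv_1_3_2, cUpv_1_3_3, cUpv_2_0_0, cUpv_2_0_1, cUpv_2_0_2, cUpv_2_0_3, cUpv_2_1_0, cUpv_2_1_1, cUpv_2_1_2, cUpv_2_1_3, cUpv_2_2_0, cUpv_2_2_1, cUpv_2_2_2,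 cUpv_2_2_3, cUpv_2_3_0, cUpv_2_3_1, cUpv_2_3_2, cUpv_2_3_3, cUpv_3_0_0, cUpv_3_0_1, cUpv_3_0_2, cUpv_3_0_3, cUpv_3_1_0, cUpv_3_1_1, cUpv_3_1_2, cUpv_3_1_3, cUpv_3_2_0, cUpv_3_2_1, cUpv_3_2_2, cUpv_3_2_3, cUpv_3_3_0, cUpv_3_3_1, cUpv_3_3_2, cUpv_3_3_3] <;> ring
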